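/- Let λ > 0 and r ∈ ℝ satisfy |r| > t_{1/2,λ} = (54^{1/3}/4)·λ^{2/3}. Then f_{1/2,λ}(r) is a global minimizer over β ∈ ℝ of the function β ↦ (β − r)² + λ|β|^{1/2}; that is, for every β ∈ ℝ, (f_{1/2,λ}(r) − r)² + λ|f_{1/2,λ}(r)|^{1/2} ≤ (β − r)² + λ|β|^{1/2}. -/

import Mathlib

/-- The half-thresholding function `f_{1/2,λ}`. -/
noncomputable def f12 (lam r : ℝ) : ℝ :=
  (2 / 3) * r *
    (1 + Real.cos (2 * Real.pi / 3 -
      (2 / 3) * Real.arccos ((lam / 8) * (|r| / 3) ^ (-(3 : ℝ) / 2))))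

/-- The threshold value `t_{1/2,λ} = (54^{1/3}/4)·λ^{2/3}`. -/
noncomputable def t12 (lam : ℝ) : ℝ :=
  (54 : ℝ) ^ ((1 : ℝ) / 3) / 4 * lam ^ ((2 : ℝ) / 3)

/-- Pure algebra: if `x > 0` solves the stationarity cubic and `2r ≤ 3x²`,
then `x²` minimizes over squares. -/
lemma key_alg (r x y lam : ℝ) (hx : 0 < x) (hy : 0 ≤ y)
    (hcu : lam = 4 * x * (r - x ^ 2)) (h2 : 2 * r ≤ 3 * x ^ 2) :
    (x ^ 2 - r) ^ 2 + lam * x ≤ (y ^ 2 - r) ^ 2 + lam * y := by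
  have hq : 0 ≤ y ^ 2 + 2 * x * y + 3 * x ^ 2 - 2 * r := by
    nlinarith [mul_nonneg hy hx.le, sq_nonneg y]
  nlinarith [mul_nonneg (sq_nonneg (y - x)) hq]

lemma t12_pos {lam : ℝ} (hlam : 0 < lam) : 0 < t12 lam := by
  unfold t12; positivity

lemma sq_half_lt {c : ℝ} (h : Real.sqrt 2 / 2 < c) : 1 / 2 < c ^ 2 := by
  have h2 : (Real.sqrt 2) ^ 2 = 2 := Real.sq_sqrt (by norm_num)
  have h0 : 0 < Real.sqrt 2 := Real.sqrt_pos.2 (by norm_num)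
  nlinarith [sq_nonneg (c - Real.sqrt 2 / 2)]

lemma h2r_lemma {s c : ℝ} (h : 1 / 2 < c ^ 2) : 2 * (3 * s ^ 2) ≤ 3 * (2 * s * c) ^ 2 := by
  nlinarith [mul_nonneg (sq_nonneg s) (by linarith : (0:ℝ) ≤ 2 * c ^ 2 - 1)]

lemma abs_sq_ineq {β r y : ℝ} (hr : 0 < r) (hy2 : y ^ 2 = |β|) :
    (y ^ 2 - r) ^ 2 ≤ (β - r) ^ 2 := by
  rw [hy2]
  nlinarith [sq_abs β, le_abs_self β]

lemma sqrt2_lt_two : Real.sqrt 2 < 2 := by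
  have h2 : (Real.sqrt 2) ^ 2 = 2 := Real.sq_sqrt (by norm_num)
  nlinarith [Real.sqrt_nonneg 2]

set_option maxHeartbeats 1000000 in
lemma aux_main (lam r : ℝ) (hlam : 0 < lam) (hr : t12 lam < r) :
    ∀ β : ℝ,
      (f12 lam r - r) ^ 2 + lam * |f12 lam r| ^ ((1 : ℝ) / 2) ≤
        (β - r) ^ 2 + lam * |β| ^ ((1 : ℝ) / 2) := by
  have hr0 : 0 < r := lt_trans (t12_pos hlam) hr
  set s : ℝ := Real.sqrt (r / 3) with hs_def
  have hs : 0 < s := Real.sqrt_pos.2 (by linarith)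
  have hs2 : s ^ 2 = r / 3 := Real.sq_sqrt (by linarith)
  clear_value s
  -- the arccos argument
  have ha_eq : (lam / 8) * (|r| / 3) ^ (-(3 : ℝ) / 2) = lam / 8 * (s ^ 3)⁻¹ := by
    rw [abs_of_pos hr0]
    congr 1
    have h1 : r / 3 = s ^ 2 := hs2.symm
    rw [h1]
    have h2 : (s ^ 2 : ℝ) = s ^ ((2 : ℕ) : ℝ) := (Real.rpow_natCast s 2).symm
    rw [h2, ← Real.rpow_natCast s 3, ← Real.rpow_neg hs.le,
        ← Real.rpow_mul hs.le]
    norm_num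
  set a : ℝ := lam / 8 * (s ^ 3)⁻¹ with ha_def
  have ha0 : 0 < a := by positivity
  clear_value a
  -- threshold bound : a < √2/2
  have h54 : ((54 : ℝ) ^ ((1 : ℝ) / 3)) ^ 3 = 54 := by
    rw [← Real.rpow_natCast ((54:ℝ) ^ ((1:ℝ)/3)) 3,
        ← Real.rpow_mul (by norm_num : (0:ℝ) ≤ 54)]
    norm_num
  have hlam3 : (lam ^ ((2 : ℝ) / 3)) ^ 3 = lam ^ 2 := by
    rw [← Real.rpow_natCast (lam ^ ((2:ℝ)/3)) 3, ← Real.rpow_mul hlam.le]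
    norm_num
  have hs6 : lam ^ 2 / 32 < s ^ 6 := by
    have h1 : t12 lam / 3 < s ^ 2 := by rw [hs2]; linarith
    have h2 : (t12 lam / 3) ^ 3 < (s ^ 2) ^ 3 := by
      apply pow_lt_pow_left₀ h1 (by linarith [t12_pos hlam])
      norm_num
    have h3 : (t12 lam / 3) ^ 3 = lam ^ 2 / 32 := by
      unfold t12
      field_simp
      rw [h54, hlam3]
      ring
    calc lam ^ 2 / 32 = (t12 lam / 3) ^ 3 := h3.symm
      _ < (s ^ 2) ^ 3 := h2
      _ = s ^ 6 := by ring
  have hsqrt2 : (Real.sqrt 2) ^ 2 = 2 := Real.sq_sqrt (by norm_num)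
  have hsqrt2_pos : 0 < Real.sqrt 2 := Real.sqrt_pos.2 (by norm_num)
  have ha_lt : a < Real.sqrt 2 / 2 := by
    have hkey : 2 * lam < Real.sqrt 2 * (8 * s ^ 3) := by
      have h1 : (2 * lam) ^ 2 < (Real.sqrt 2 * (8 * s ^ 3)) ^ 2 := by
        nlinarith [hs6, hsqrt2]
      exact lt_of_pow_lt_pow_left₀ 2 (by positivity) h1
    have h2 : a = lam / (8 * s ^ 3) := by rw [ha_def]; ring
    rw [h2, div_lt_div_iff₀ (by positivity) (by norm_num : (0:ℝ) < 2)]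
    linarith
  clear hs6 hlam3 h54
  -- the angle
  set φ := Real.arccos a with hφ_def
  clear_value φ
  have hφ_pi : φ ≤ Real.pi := by rw [hφ_def]; exact Real.arccos_le_pi a
  have hφ4 : Real.pi / 4 < φ := by
    by_contra h
    push_neg at h
    rw [hφ_def] at h
    have := (Real.arccos_le_pi_div_four).1 h
    linarith
  set ψ := Real.pi / 3 - φ / 3 with hψ_def
  clear_value ψ
  have hψ0 : 0 ≤ ψ := by rw [hψ_def]; linarith
  have hψ4 : ψ < Real.pi / 4 := by rw [hψ_def]; linarith
  set c := Real.cos ψ with hc_def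
  clear_value c
  have hc_lb : Real.sqrt 2 / 2 < c := by
    have hpi4 : Real.pi / 4 ≤ Real.pi := by linarith [Real.pi_pos]
    have h := Real.cos_lt_cos_of_nonneg_of_le_pi hψ0 hpi4 hψ4
    rwa [Real.cos_pi_div_four, ← hc_def] at h
  have hc0 : 0 < c := lt_trans (by positivity) hc_lb
  have ha1 : a ≤ 1 := by
    have := sqrt2_lt_two
    linarith
  have hcosφ : Real.cos φ = a := by
    rw [hφ_def]; exact Real.cos_arccos (by linarith) ha1
  have h3ψ : 4 * c ^ 3 - 3 * c = -a := by
    have h1 : Real.cos (3 * ψ) = 4 * Real.cos ψ ^ 3 - 3 * Real.cos ψ :=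
      Real.cos_three_mul ψ
    have h2 : 3 * ψ = Real.pi - φ := by rw [hψ_def]; ring
    rw [h2, Real.cos_pi_sub, hcosφ, ← hc_def] at h1
    linarith
  set x := 2 * s * c with hx_def
  clear_value x
  have hx : 0 < x := by rw [hx_def]; positivity
  have haa : a * s ^ 3 = lam / 8 := by
    rw [ha_def]; field_simp
  have hr3 : r = 3 * s ^ 2 := by
    have := hs2; linarith
  have hcubic : x ^ 3 - r * x + lam / 4 = 0 := by
    rw [hx_def, hr3]
    linear_combination 2 * s ^ 3 * h3ψ - 2 * haa
  have hlam_eq : lam = 4 * x * (r - x ^ 2) := by linear_combination 4 * hcubic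
  have h2r : 2 * r ≤ 3 * x ^ 2 := by
    rw [hx_def, hr3]
    exact h2r_lemma (sq_half_lt hc_lb)
  have hf : f12 lam r = x ^ 2 := by
    unfold f12
    rw [ha_eq, ← hφ_def]
    have h2 : 2 * Real.pi / 3 - 2 / 3 * φ = 2 * ψ := by rw [hψ_def]; ring
    rw [h2, Real.cos_two_mul, ← hc_def, hr3, hx_def]
    ring
  intro β
  rw [hf, abs_of_nonneg (sq_nonneg x)]
  have hrx : (x ^ 2 : ℝ) ^ ((1 : ℝ) / 2) = x := by
    rw [← Real.sqrt_eq_rpow, Real.sqrt_sq hx.le]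
  rw [hrx]
  set y := Real.sqrt |β| with hy_def
  clear_value y
  have hy0 : 0 ≤ y := by rw [hy_def]; exact Real.sqrt_nonneg _
  have hy2 : y ^ 2 = |β| := by rw [hy_def]; exact Real.sq_sqrt (abs_nonneg β)
  have hβ : |β| ^ ((1 : ℝ) / 2) = y := by rw [hy_def, Real.sqrt_eq_rpow]
  rw [hβ]
  calc (x ^ 2 - r) ^ 2 + lam * x
      ≤ (y ^ 2 - r) ^ 2 + lam * y := key_alg r x y lam hx hy0 hlam_eq h2r
    _ ≤ (β - r) ^ 2 + lam * y := by
        have := abs_sq_ineq hr0 hy2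
        linarith

theorem stmt_0 (lam r : ℝ) (hlam : 0 < lam) (hr : t12 lam < |r|) :
    ∀ β : ℝ,
      (f12 lam r - r) ^ 2 + lam * |f12 lam r| ^ ((1 : ℝ) / 2) ≤
        (β - r) ^ 2 + lam * |β| ^ ((1 : ℝ) / 2) := by
  intro β
  rcases lt_trichotomy r 0 with hneg | hzero | hpos
  · have hr' : t12 lam < -r := by rwa [abs_of_neg hneg] at hr
    have h := aux_main lam (-r) hlam hr' (-β)
    have hfneg : f12 lam (-r) = -f12 lam r := by
      unfold f12
      rw [abs_neg]
      ring
    rw [hfneg, abs_neg, abs_neg] at h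
    have e1 : (-f12 lam r - -r) ^ 2 = (f12 lam r - r) ^ 2 := by ring
    have e2 : (-β - -r) ^ 2 = (β - r) ^ 2 := by ring
    rw [e1, e2] at h
    exact h
  · rw [hzero, abs_zero] at hr
    linarith [t12_pos hlam]
  · exact aux_main lam r hlam (by rwa [abs_of_pos hpos] at hr) β
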